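/- For every connected simple graph G of diameter d ≥ 4 with minimum degree at least two, th_-(G) ≥ √d − 1/4. -/
import Mathlib


open SimpleGraph

/-- One round of skew zero forcing: every vertex (blue or white) with exactly one
white neighbor colors that neighbor blue. -/
def skewStep {V : Type*} (G : SimpleGraph V) (B : Set V) : Set V :=
  B ∪ {w | ∃ v, G.Adj v w ∧ ∀ u, G.Adj v u → u ∉ B → u = w}

/-- The set of blue vertices after `n` rounds of skew zero forcing starting from `S`. -/
def skewIter {V : Type*} (G : SimpleGraph V) (S : Set V) : ℕ → Set V
  | 0 => S
  | n + 1 => skewStep G (skewIter G S n)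

/-- `S` is a skew zero forcing set of `G`. -/
def IsSkewZFS {V : Type*} (G : SimpleGraph V) (S : Set V) : Prop :=
  ∃ n, skewIter G S n = Set.univ

/-- The skew propagation time `pt₋(G;S)`: the number of rounds needed for all
vertices to become blue. -/
noncomputable def skewPt {V : Type*} (G : SimpleGraph V) (S : Set V) : ℕ :=
  sInf {n | skewIter G S n = Set.univ}

/-- The skew throttling number `th₋(G)`. -/
noncomputable def skewTh {V : Type*} (G : SimpleGraph V) : ℕ :=
  sInf {m | ∃ S : Set V, IsSkewZFS G S ∧ m = S.ncard + skewPt G S}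

/-- The skew throttling number over sets of size `k`, `th₋(G,k)`. -/
noncomputable def skewThK {V : Type*} (G : SimpleGraph V) (k : ℕ) : ℕ :=
  sInf {m | ∃ S : Set V, IsSkewZFS G S ∧ S.ncard = k ∧ m = S.ncard + skewPt G S}

/-- The skew zero forcing number `Z₋(G)`. -/
noncomputable def skewZ {V : Type*} (G : SimpleGraph V) : ℕ :=
  sInf {m | ∃ S : Set V, IsSkewZFS G S ∧ m = S.ncard}

/-- The skew propagation time `pt₋(G)`: minimum propagation time over minimum
skew zero forcing sets. -/
noncomputable def skewPtMin {V : Type*} (G : SimpleGraph V) : ℕ :=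
  sInf {m | ∃ S : Set V, IsSkewZFS G S ∧ S.ncard = skewZ G ∧ m = skewPt G S}

/-- `rK₂`: the disjoint union of `r` copies of `K₂`. -/
def rK2 (r : ℕ) : SimpleGraph (Fin r × Fin 2) :=
  SimpleGraph.fromRel (fun a b => a.1 = b.1)

/-- Disjoint union of two simple graphs. -/
def disjUnion {α β : Type*} (G : SimpleGraph α) (H : SimpleGraph β) :
    SimpleGraph (α ⊕ β) :=
  SimpleGraph.fromRel (fun x y =>
    match x, y with
    | Sum.inl a, Sum.inl b => G.Adj a b
    | Sum.inr a, Sum.inr b => H.Adj a b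
    | _, _ => False)

/-- The corona `G ∘ K₁`: attach a pendant leaf to every vertex of `G`. -/
def coronaK1 {α : Type*} (G : SimpleGraph α) : SimpleGraph (α ⊕ α) :=
  SimpleGraph.fromRel (fun x y =>
    match x, y with
    | Sum.inl a, Sum.inl b => G.Adj a b
    | Sum.inl a, Sum.inr b => a = b
    | _, _ => False)

/-- The corona `G ∘ K₂`: attach a private copy of `K₂` (a triangle) to every
vertex of `G`. -/
def coronaK2 {α : Type*} (G : SimpleGraph α) : SimpleGraph (α ⊕ α × Fin 2) :=
  SimpleGraph.fromRel (fun x y =>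
    match x, y with
    | Sum.inl a, Sum.inl b => G.Adj a b
    | Sum.inl a, Sum.inr b => a = b.1
    | Sum.inr a, Sum.inr b => a.1 = b.1
    | _, _ => False)

/-- The graph `H(s,t)` with hub `b`, pendant paths `b xᵢ yᵢ` and triangles `b zᵢ wᵢ`. -/
def Hgraph (s t : ℕ) : SimpleGraph (Unit ⊕ ((Fin s × Fin 2) ⊕ (Fin t × Fin 2))) :=
  SimpleGraph.fromRel (fun x y =>
    match x, y with
    | Sum.inl _, Sum.inr (Sum.inl p) => p.2 = 0
    | Sum.inl _, Sum.inr (Sum.inr _) => True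
    | Sum.inr (Sum.inl p), Sum.inr (Sum.inl q) => p.1 = q.1
    | Sum.inr (Sum.inr p), Sum.inr (Sum.inr q) => p.1 = q.1
    | _, _ => False)

/-- The friendship graph `Fₙ`: a universal vertex joined to `n` disjoint copies of `K₂`. -/
def friendshipGraph (n : ℕ) : SimpleGraph (Unit ⊕ (Fin n × Fin 2)) :=
  SimpleGraph.fromRel (fun x y =>
    match x, y with
    | Sum.inl _, Sum.inr _ => True
    | Sum.inr p, Sum.inr q => p.1 = q.1
    | _, _ => False)

/-- The balanced spider `T_{p,ℓ}`: a center with `p` legs of `ℓ` vertices each. -/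
def spider (p ℓ : ℕ) : SimpleGraph (Unit ⊕ (Fin p × Fin ℓ)) :=
  SimpleGraph.fromRel (fun x y =>
    match x, y with
    | Sum.inl _, Sum.inr q => q.2.val = 0
    | Sum.inr q, Sum.inr q' => q.1 = q'.1 ∧ q'.2.val = q.2.val + 1
    | _, _ => False)


/-- The hypercube graph `Qₙ`: binary strings of length `n`, adjacent iff they
differ in exactly one coordinate. -/
def hypercube (n : ℕ) : SimpleGraph (Fin n → Bool) :=
  SimpleGraph.fromRel (fun x y => ∃! i, x i ≠ y i)
/-- Each blue vertex after `t` rounds is within distance `2t` of the initial set,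
assuming minimum degree at least 2. -/
lemma skewIter_dist_le {V : Type*} [Fintype V] (G : SimpleGraph V) (hc : G.Connected)
    (hδ : ∀ v : V, 2 ≤ (G.neighborSet v).ncard) (S : Set V) :
    ∀ t, ∀ w ∈ skewIter G S t, ∃ s ∈ S, G.dist s w ≤ 2 * t := by
  intro t
  induction t with
  | zero => exact fun w hw => ⟨w, hw, by simp⟩
  | succ n ih =>
    intro w hw
    rcases hw with hw | ⟨v, hvw, hall⟩
    · obtain ⟨s, hsS, hds⟩ := ih w hw
      exact ⟨s, hsS, hds.trans (by omega)⟩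
    · have h2 : 1 < (G.neighborSet v).ncard := by have := hδ v; omega
      obtain ⟨u, hu, hune⟩ := Set.exists_ne_of_one_lt_ncard h2 w
      have huB : u ∈ skewIter G S n := by
        by_contra h
        exact hune (hall u hu h)
      obtain ⟨s, hsS, hds⟩ := ih u huB
      refine ⟨s, hsS, ?_⟩
      have huv : G.dist u v = 1 := SimpleGraph.dist_eq_one_iff_adj.mpr hu.symm
      have hvw' : G.dist v w = 1 := SimpleGraph.dist_eq_one_iff_adj.mpr hvw
      have t1 : G.dist s w ≤ G.dist s u + G.dist u w := hc.dist_triangle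
      have t2 : G.dist u w ≤ G.dist u v + G.dist v w := hc.dist_triangle
      omega

/-- Consecutive-ish vertices on a walk are close. -/
lemma walk_getVert_dist_le {V : Type*} (G : SimpleGraph V) (hc : G.Connected)
    {x y : V} (p : G.Walk x y) :
    ∀ n i : ℕ, G.dist (p.getVert i) (p.getVert (i + n)) ≤ n := by
  intro n
  induction n with
  | zero => simp
  | succ m ih =>
    intro i
    by_cases h : i + m < p.length
    · have hadj := p.adj_getVert_succ h
      have h1 : G.dist (p.getVert (i + m)) (p.getVert (i + m + 1)) = 1 :=
        SimpleGraph.dist_eq_one_iff_adj.mpr hadj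
      have t1 : G.dist (p.getVert i) (p.getVert (i + m + 1)) ≤
          G.dist (p.getVert i) (p.getVert (i + m)) +
          G.dist (p.getVert (i + m)) (p.getVert (i + m + 1)) := hc.dist_triangle
      have := ih i
      have he : i + (m + 1) = i + m + 1 := rfl
      rw [he]
      omega
    · push_neg at h
      have h1 : p.getVert (i + m) = y := p.getVert_of_length_le h
      have h2 : p.getVert (i + (m + 1)) = y := p.getVert_of_length_le (by omega)
      have := ih i
      rw [h1] at this
      rw [h2]
      omega

/-- for connected graphs of diameter `d ≥ 4` and minimum degree at
least two, `th₋(G) ≥ √d - 1/4`. -/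
theorem skewTh_ge_sqrt_diam {V : Type*} [Fintype V] (G : SimpleGraph V)
    (hc : G.Connected) (d : ℕ) (hd : G.diam = d) (hd4 : 4 ≤ d)
    (hδ : ∀ v : V, 2 ≤ (G.neighborSet v).ncard) :
    Real.sqrt d - 1 / 4 ≤ (skewTh G : ℝ) := by
  classical
  have hV : Nonempty V := hc.nonempty
  obtain ⟨x, y, hxy⟩ := G.exists_dist_eq_diam
  rw [hd] at hxy
  -- skewTh is attained
  have hne : {m | ∃ S : Set V, IsSkewZFS G S ∧ m = S.ncard + skewPt G S}.Nonempty :=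
    ⟨(Set.univ : Set V).ncard + skewPt G Set.univ, Set.univ, ⟨0, rfl⟩, rfl⟩
  obtain ⟨S, hS, hmeq⟩ := Nat.sInf_mem hne
  set k := S.ncard with hk
  set t := skewPt G S with ht
  have hiter : skewIter G S t = Set.univ := Nat.sInf_mem hS
  -- shortest walk from x to y
  obtain ⟨p, hp⟩ := hc.exists_walk_length_eq_dist x y
  rw [hxy] at hp
  -- distances along the walk
  have hdx : ∀ i : ℕ, i ≤ d → G.dist x (p.getVert i) = i := by
    intro i hi
    have h1 : G.dist x (p.getVert i) ≤ i := by
      have := walk_getVert_dist_le G hc p i 0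
      simpa using this
    have h2 : G.dist (p.getVert i) y ≤ d - i := by
      have := walk_getVert_dist_le G hc p (d - i) i
      have he : i + (d - i) = d := by omega
      rw [he] at this
      have hy : p.getVert d = y := p.getVert_of_length_le (by omega)
      rwa [hy] at this
    have h3 : G.dist x y ≤ G.dist x (p.getVert i) + G.dist (p.getVert i) y :=
      hc.dist_triangle
    omega
  -- each walk vertex is close to S
  have hall : ∀ i : ℕ, ∃ s ∈ S, G.dist s (p.getVert i) ≤ 2 * t := by
    intro i
    exact skewIter_dist_le G hc hδ S t (p.getVert i) (by rw [hiter]; trivial)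
  choose s hsS hsd using hall
  set M := 4 * t + 1 with hM
  have hMpos : 0 < M := by omega
  haveI : Fintype ↥S := (Set.toFinite S).fintype
  -- the injection
  have key : d + 1 ≤ k * M := by
    have main : ∀ a b : ℕ, a ≤ b → b ≤ d → s a = s b → a % M = b % M → a = b := by
      intro a b hab hbd hsab hmod
      have hda : G.dist x (p.getVert a) = a := hdx a (by omega)
      have hdb : G.dist x (p.getVert b) = b := hdx b hbd
      have hdist : G.dist (p.getVert a) (p.getVert b) ≤ 4 * t := by
        have t1 : G.dist (p.getVert a) (p.getVert b) ≤
            G.dist (p.getVert a) (s a) + G.dist (s a) (p.getVert b) := hc.dist_triangle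
        have e1 : G.dist (p.getVert a) (s a) = G.dist (s a) (p.getVert a) :=
          SimpleGraph.dist_comm ..
        have := hsd a
        have := hsd b
        rw [← hsab] at this
        omega
      have hba : b ≤ a + G.dist (p.getVert a) (p.getVert b) := by
        have t1 : G.dist x (p.getVert b) ≤
            G.dist x (p.getVert a) + G.dist (p.getVert a) (p.getVert b) := hc.dist_triangle
        omega
      have hzero : (b - a) % M = 0 := Nat.sub_mod_eq_zero_of_mod_eq hmod.symm
      have hlt : b - a < M := by omega
      have : (b - a) % M = b - a := Nat.mod_eq_of_lt hlt
      omega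
    let F : Fin (d + 1) → ↥S × Fin M := fun i =>
      (⟨s i, hsS i⟩, ⟨(i : ℕ) % M, Nat.mod_lt _ hMpos⟩)
    have hinj : Function.Injective F := by
      intro a b hab
      simp only [F, Prod.mk.injEq, Subtype.mk.injEq, Fin.mk.injEq] at hab
      obtain ⟨h1, h2⟩ := hab
      have ha := a.isLt
      have hb := b.isLt
      rcases le_total (a : ℕ) (b : ℕ) with h | h
      · exact Fin.ext (main a b h (by omega) h1 h2)
      · exact (Fin.ext (main b a h (by omega) h1.symm h2.symm)).symm
    have hcard := Fintype.card_le_of_injective F hinj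
    rw [Fintype.card_fin, Fintype.card_prod, Fintype.card_fin] at hcard
    have hSc : Fintype.card ↥S = k := by
      rw [hk, Set.ncard_eq_toFinset_card' S, Set.toFinset_card]
    rwa [hSc] at hcard
  -- arithmetic
  have hth : (skewTh G : ℝ) = (k : ℝ) + t := by
    rw [skewTh, hmeq]
    push_cast
    ring
  rw [hth]
  have hdle : (d : ℝ) ≤ ((k : ℝ) + t + 1 / 4) ^ 2 := by
    have : (d : ℝ) + 1 ≤ (k : ℝ) * (4 * t + 1) := by
      have := key
      rw [hM] at this
      push_cast
      exact_mod_cast this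
    nlinarith [sq_nonneg ((k : ℝ) - t - 1 / 4)]
  have hs1 : Real.sqrt d ≤ (k : ℝ) + t + 1 / 4 := by
    calc Real.sqrt d ≤ Real.sqrt (((k : ℝ) + t + 1 / 4) ^ 2) := Real.sqrt_le_sqrt hdle
      _ = (k : ℝ) + t + 1 / 4 := Real.sqrt_sq (by positivity)
  linarith
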